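/- arXiv:1507.00243 — 3 statements merged into one kernel-verified Lean document; each statement's English description precedes it below -/
import Mathlib

section
/- Let 1 ≤ k ≤ n and let u ∈ U(k) be a k×k unitary matrix. Then there exists a (k-1)×(k-1) unitary matrix v ∈ U(k-1) such that the normalized trace distance in M_n(ℂ) between v ⊕ 1_{n-k+1} and u ⊕ 1_{n-k} is at most 4/n. -/
open Matrix
open scoped ComplexOrder

/-- The absolute value `|x| = (x*x)^{1/2}` of a complex matrix. -/
noncomputable def mAbs {n : ℕ} (x : Matrix (Fin n) (Fin n) ℂ) : Matrix (Fin n) (Fin n) ℂ :=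
  ((Matrix.posSemidef_conjTranspose_mul_self x).1.eigenvectorUnitary : Matrix (Fin n) (Fin n) ℂ) *
    diagonal ((↑) ∘ (√·) ∘ (Matrix.posSemidef_conjTranspose_mul_self x).1.eigenvalues) *
    (star (Matrix.posSemidef_conjTranspose_mul_self x).1.eigenvectorUnitary : Matrix (Fin n) (Fin n) ℂ)

/-- The normalized trace norm `‖x‖₁ = (1/n)·tr(|x|)`. -/
noncomputable def trNorm {n : ℕ} (x : Matrix (Fin n) (Fin n) ℂ) : ℝ :=
  (1 / (n : ℝ)) * (mAbs x).trace.re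

/-- The operator norm of a matrix acting on `ℂⁿ`. -/
noncomputable def opNorm {n : ℕ} (x : Matrix (Fin n) (Fin n) ℂ) : ℝ :=
  ‖Matrix.toEuclideanCLM (𝕜 := ℂ) x‖

/-- The block-diagonal padding `u ⊕ 1_{n-k}` of a `k×k` matrix to an `n×n` matrix. -/
def pad {k n : ℕ} (_h : k ≤ n) (u : Matrix (Fin k) (Fin k) ℂ) : Matrix (Fin n) (Fin n) ℂ :=
  fun i j =>
    if hi : (i : ℕ) < k then (if hj : (j : ℕ) < k then u ⟨i, hi⟩ ⟨j, hj⟩ else 0)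
    else (if (i : ℕ) = (j : ℕ) then 1 else 0)

lemma vmv_mul_vmv {k : ℕ} (a b c d : Fin k → ℂ) :
    vecMulVec a (star b) * vecMulVec c (star d) = (star b ⬝ᵥ c) • vecMulVec a (star d) := by
  ext i j
  simp only [mul_apply, vecMulVec_apply, Matrix.smul_apply, dotProduct, smul_eq_mul, Finset.sum_mul,
    Finset.mul_sum]
  refine Finset.sum_congr rfl fun l _ => by ring

lemma vmv_conjT {k : ℕ} (a b : Fin k → ℂ) :
    (vecMulVec a (star b))ᴴ = vecMulVec b (star a) := by
  ext i j
  simp [vecMulVec_apply, conjTranspose_apply, mul_comm]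

lemma vmv_trace {k : ℕ} (a b : Fin k → ℂ) :
    (vecMulVec a (star b)).trace = star b ⬝ᵥ a := by
  simp [trace, vecMulVec_apply, dotProduct, diag, mul_comm]

lemma vmv_mulVec {k : ℕ} (a b x : Fin k → ℂ) :
    (vecMulVec a (star b)).mulVec x = (star b ⬝ᵥ x) • a := by
  ext i
  simp only [mulVec, dotProduct, vecMulVec_apply, Pi.smul_apply, smul_eq_mul]
  rw [Finset.sum_mul]
  refine Finset.sum_congr rfl fun l _ => by ring

lemma sandwich_mul {k : ℕ} (u P Q : Matrix (Fin k) (Fin k) ℂ) (hu2 : u * uᴴ = 1) :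
    (uᴴ * (P * u)) * (uᴴ * (Q * u)) = uᴴ * ((P * Q) * u) := by
  calc (uᴴ * (P * u)) * (uᴴ * (Q * u)) = uᴴ * (P * ((u * uᴴ) * (Q * u))) := by
        simp only [Matrix.mul_assoc]
    _ = uᴴ * ((P * Q) * u) := by rw [hu2, one_mul, Matrix.mul_assoc]

lemma sandwich_conj {k : ℕ} (u P : Matrix (Fin k) (Fin k) ℂ) :
    (P * u)ᴴ * (P * u) = uᴴ * ((Pᴴ * P) * u) := by
  rw [Matrix.conjTranspose_mul]
  simp only [Matrix.mul_assoc]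


variable {k n : ℕ}

/-- embed a `k×k` matrix into `n×n` with zero padding -/
def emb (_h : k ≤ n) (x : Matrix (Fin k) (Fin k) ℂ) : Matrix (Fin n) (Fin n) ℂ :=
  fun i j =>
    if hi : (i : ℕ) < k then (if hj : (j : ℕ) < k then x ⟨i, hi⟩ ⟨j, hj⟩ else 0) else 0

lemma sum_restrict (h : k ≤ n) (g : Fin n → ℂ)
    (hg : ∀ i : Fin n, ¬ (i : ℕ) < k → g i = 0) :
    ∑ i : Fin n, g i = ∑ i : Fin k, g (Fin.castLE h i) := by
  classical
  have : ∑ i : Fin k, g (Fin.castLE h i) = ∑ i ∈ Finset.univ.map (Fin.castLEEmb h), g i :=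
    (Finset.sum_map Finset.univ (Fin.castLEEmb h) g).symm
  rw [this]
  symm
  apply Finset.sum_subset (Finset.subset_univ _)
  intro x _ hx
  apply hg
  intro hxk
  refine hx ?_
  simp only [Finset.mem_map, Finset.mem_univ, true_and]
  exact ⟨⟨x, hxk⟩, by ext; simp⟩


variable {k n : ℕ}

lemma emb_mul (h : k ≤ n) (x y : Matrix (Fin k) (Fin k) ℂ) :
    emb h x * emb h y = emb h (x * y) := by
  ext i j
  simp only [emb, mul_apply]
  by_cases hi : (i:ℕ) < k
  · by_cases hj : (j:ℕ) < k
    · rw [dif_pos hi, dif_pos hj]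
      rw [sum_restrict h _ (fun l hl => by simp [hl])]
      refine Finset.sum_congr rfl fun l _ => ?_
      have hl : ((Fin.castLE h l : Fin n):ℕ) < k := l.isLt
      simp [hi, hj, hl, Fin.eta]
    · rw [dif_pos hi, dif_neg hj]
      refine Finset.sum_eq_zero fun l _ => by
        by_cases hl : (l:ℕ) < k <;> simp [hl, hj]
  · rw [dif_neg hi]
    exact Finset.sum_eq_zero fun l _ => by simp [hi]

lemma emb_conjT (h : k ≤ n) (x : Matrix (Fin k) (Fin k) ℂ) :
    (emb h x)ᴴ = emb h xᴴ := by
  ext i j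
  simp only [emb, conjTranspose_apply]
  split_ifs <;> simp

lemma emb_trace (h : k ≤ n) (x : Matrix (Fin k) (Fin k) ℂ) :
    (emb h x).trace = x.trace := by
  simp only [trace, diag]
  rw [sum_restrict h _ (fun i hi => by simp only [emb]; rw [dif_neg hi])]
  refine Finset.sum_congr rfl fun l _ => ?_
  simp only [emb]
  rw [dif_pos (show ((Fin.castLE h l : Fin n):ℕ) < k from l.isLt)]
  simp [Fin.eta]

lemma emb_posSemidef (h : k ≤ n) {x : Matrix (Fin k) (Fin k) ℂ} (hx : x.PosSemidef) :
    (emb h x).PosSemidef := by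
  rw [posSemidef_iff_dotProduct_mulVec]
  constructor
  · show (emb h x)ᴴ = emb h x
    rw [emb_conjT, hx.1.eq]
  · intro v
    have key : star v ⬝ᵥ (emb h x).mulVec v
        = star (fun l : Fin k => v (Fin.castLE h l)) ⬝ᵥ x.mulVec (fun l => v (Fin.castLE h l)) := by
      simp only [dotProduct, mulVec, dotProduct, Pi.star_apply]
      rw [sum_restrict h _ (fun i hi => by
        have : ∀ l, emb h x i l = 0 := fun l => by simp only [emb]; rw [dif_neg hi]
        simp [this])]
      refine Finset.sum_congr rfl fun i _ => ?_
      congr 1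
      rw [sum_restrict h _ (fun l hl => by
        simp only [emb]
        rw [dif_pos (show ((Fin.castLE h i : Fin n):ℕ) < k from i.isLt), dif_neg hl, zero_mul])]
      refine Finset.sum_congr rfl fun l _ => ?_
      simp only [emb]
      rw [dif_pos (show ((Fin.castLE h i : Fin n):ℕ) < k from i.isLt),
        dif_pos (show ((Fin.castLE h l : Fin n):ℕ) < k from l.isLt)]
      simp [Fin.eta]
    rw [key]
    exact hx.dotProduct_mulVec_nonneg _


lemma pad_sub {k n : ℕ} (h : k ≤ n) (x y : Matrix (Fin k) (Fin k) ℂ) :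
    pad h x - pad h y = emb h (x - y) := by
  ext i j
  simp only [pad, emb, Matrix.sub_apply]
  split_ifs <;> simp

open scoped MatrixOrder in
lemma mAbs_eq_of {n : ℕ} (x B : Matrix (Fin n) (Fin n) ℂ) (hB : B.PosSemidef)
    (h : B * B = xᴴ * x) : mAbs x = B := by
  have hX := Matrix.posSemidef_conjTranspose_mul_self x
  have e1 : mAbs x = cfc Real.sqrt (xᴴ * x) := by
    rw [hX.1.cfc_eq]
    rfl
  rw [e1, ← cfcₙ_eq_cfc, ← CFC.sqrt_eq_real_sqrt _ (nonneg_iff_posSemidef.mpr hX)]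
  exact CFC.sqrt_unique h (nonneg_iff_posSemidef.mpr hB)

lemma main_step (m n : ℕ) (h : m + 1 ≤ n)
    (u w B : Matrix (Fin (m+1)) (Fin (m+1)) ℂ)
    (hw1 : wᴴ * w = 1)
    (hwcol : ∀ i, w i (Fin.last m) = if i = Fin.last m then 1 else 0)
    (hB : B.PosSemidef) (hB2 : B ^ 2 = (w - u)ᴴ * (w - u))
    (htr : B.trace.re ≤ 4) :
    ∃ v : Matrix.unitaryGroup (Fin m) ℂ,
      trNorm (pad (le_trans (Nat.le_succ m) h) (v : Matrix (Fin m) (Fin m) ℂ)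
        - pad h u) ≤ 4 / n := by
  have hrow : ∀ jj, w (Fin.last m) jj = if jj = Fin.last m then 1 else 0 := by
    intro jj
    have key : (wᴴ * w) jj (Fin.last m) = starRingEnd ℂ (w (Fin.last m) jj) := by
      simp only [mul_apply, conjTranspose_apply, hwcol]
      simp [Finset.sum_ite_eq', mul_comm]
    rw [hw1] at key
    have key2 := congrArg (starRingEnd ℂ) key
    simp only [RingHomCompTriple.comp_apply, RingHom.id_apply, Complex.conj_conj] at key2
    rw [← key2]
    by_cases hj : jj = Fin.last m <;> simp [Matrix.one_apply, hj]
  set v : Matrix (Fin m) (Fin m) ℂ := fun i j => w i.castSucc j.castSucc with hv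
  have hvu : v ∈ Matrix.unitaryGroup (Fin m) ℂ := by
    rw [Matrix.mem_unitaryGroup_iff']
    ext i j
    have h1 := congrFun (congrFun hw1 i.castSucc) j.castSucc
    rw [mul_apply] at h1
    rw [Fin.sum_univ_castSucc] at h1
    have hz : w (Fin.last m) i.castSucc = 0 := by
      rw [hrow]
      exact if_neg (Fin.castSucc_lt_last i).ne
    simp only [conjTranspose_apply, hz, star_zero, map_zero, zero_mul, add_zero] at h1
    show (star v * v) i j = (1 : Matrix (Fin m) (Fin m) ℂ) i j
    rw [mul_apply]
    rw [Matrix.star_eq_conjTranspose]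
    simp_rw [conjTranspose_apply, hv]
    rw [h1]
    by_cases hij : i = j
    · simp [hij, Matrix.one_apply]
    · simp [Matrix.one_apply, hij, fun hc => hij (Fin.castSucc_injective m hc)]
  refine ⟨⟨v, hvu⟩, ?_⟩
  have hpad : pad (le_trans (Nat.le_succ m) h) v = pad h w := by
    ext i j
    simp only [pad]
    by_cases hi : (i:ℕ) < m
    · have hi' : (i:ℕ) < m+1 := by omega
      rw [dif_pos hi, dif_pos hi']
      by_cases hj : (j:ℕ) < m
      · have hj' : (j:ℕ) < m+1 := by omega
        rw [dif_pos hj, dif_pos hj']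
        rfl
      · rw [dif_neg hj]
        by_cases hj' : (j:ℕ) < m+1
        · rw [dif_pos hj']
          have hl : (⟨(j:ℕ), hj'⟩ : Fin (m+1)) = Fin.last m := by
            ext; simp only [Fin.val_last]; omega
          rw [hl, hwcol, if_neg]
          intro hc
          have : (i:ℕ) = m := by
            have := congrArg Fin.val hc
            simpa using this
          omega
        · rw [dif_neg hj']
    · by_cases hi' : (i:ℕ) < m+1
      · rw [dif_neg hi, dif_pos hi']
        have him : (i:ℕ) = m := by omega
        have hl : (⟨(i:ℕ), hi'⟩ : Fin (m+1)) = Fin.last m := by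
          ext; simp only [Fin.val_last]; omega
        rw [hl]
        by_cases hj' : (j:ℕ) < m+1
        · rw [dif_pos hj', hrow]
          have hcond : ((⟨(j:ℕ), hj'⟩ : Fin (m+1)) = Fin.last m) = ((i:ℕ) = (j:ℕ)) := by
            apply propext
            rw [Fin.ext_iff]
            show ((j:ℕ) = m) ↔ _
            omega
          simp only [hcond]
        · rw [dif_neg hj', if_neg (by omega)]
      · rw [dif_neg hi, dif_neg hi']
  show trNorm (pad (le_trans (Nat.le_succ m) h) v - pad h u) ≤ 4 / n
  rw [hpad, pad_sub]
  have hBB : B * B = (w - u)ᴴ * (w - u) := by rw [← pow_two]; exact hB2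
  have habs : mAbs (emb h (w - u)) = emb h B := by
    refine mAbs_eq_of _ _ (emb_posSemidef h hB) ?_
    rw [emb_mul, hBB, emb_conjT, emb_mul]
  unfold trNorm
  rw [habs, emb_trace]
  have hn : (0:ℝ) < n := by
    have : 0 < m + 1 := Nat.succ_pos m
    exact_mod_cast lt_of_lt_of_le this h
  rw [show (4:ℝ)/n = (1/n)*4 by ring]
  exact mul_le_mul_of_nonneg_left htr (by positivity)

set_option maxHeartbeats 4000000 in
theorem exists_unitary_close (k n : ℕ) (hk : 1 ≤ k) (hkn : k ≤ n)
    (u : Matrix.unitaryGroup (Fin k) ℂ) :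
    ∃ v : Matrix.unitaryGroup (Fin (k - 1)) ℂ,
      trNorm (pad (le_trans (Nat.sub_le k 1) hkn) (v : Matrix (Fin (k-1)) (Fin (k-1)) ℂ)
          - pad hkn (u : Matrix (Fin k) (Fin k) ℂ)) ≤ 4 / n := by
  obtain ⟨m, rfl⟩ : ∃ m, k = m + 1 := ⟨k - 1, (Nat.succ_pred_eq_of_pos hk).symm⟩
  obtain ⟨u₀, hu⟩ := u
  have hu1 : u₀ᴴ * u₀ = 1 := by
    rw [← Matrix.star_eq_conjTranspose]
    exact Matrix.mem_unitaryGroup_iff'.mp hu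
  have hu2 : u₀ * u₀ᴴ = 1 := by
    rw [← Matrix.star_eq_conjTranspose]
    exact Matrix.mem_unitaryGroup_iff.mp hu
  suffices hgoal : ∃ w B : Matrix (Fin (m+1)) (Fin (m+1)) ℂ,
      wᴴ * w = 1 ∧ (∀ i, w i (Fin.last m) = if i = Fin.last m then 1 else 0) ∧
      B.PosSemidef ∧ B ^ 2 = (w - u₀)ᴴ * (w - u₀) ∧ B.trace.re ≤ 4 by
    obtain ⟨w, B, hw1, hwcol, hB, hB2, htr⟩ := hgoal
    exact main_step m n hkn u₀ w B hw1 hwcol hB hB2 htr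
  by_cases hA : ∀ i, i ≠ Fin.last m → u₀ i (Fin.last m) = 0
  ·
    set K := Fin.last m with hK
    set e : Fin (m+1) → ℂ := fun i => if i = K then 1 else 0 with he
    have hse : star e = e := by
      funext i
      by_cases hi : i = K <;> simp [he, hi]
    set c : ℂ := u₀ K K with hc_def
    have hee : star e ⬝ᵥ e = 1 := by
      rw [hse]
      simp [dotProduct, he]
    set E : Matrix (Fin (m+1)) (Fin (m+1)) ℂ := vecMulVec e (star e) with hE
    have hEH : Eᴴ = E := by rw [hE, vmv_conjT, hse]
    have hEE : E * E = E := by rw [hE, vmv_mul_vmv, hee, one_smul]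
    have hxi : ∀ i, u₀ i K = c * e i := by
      intro i
      by_cases hi : i = K
      · simp [he, hi, hc_def]
      · simp [he, hi, hA i hi]
    have heK : e K = 1 := by simp [he]
    have heNe : ∀ i, i ≠ K → e i = 0 := fun i hi => by simp [he, hi]
    have hc : starRingEnd ℂ c * c = 1 := by
      have h1 : (u₀ᴴ * u₀) K K = starRingEnd ℂ c * c := by
        rw [mul_apply]
        rw [Finset.sum_eq_single K]
        · simp [conjTranspose_apply, hc_def]
        · intro i _ hi
          rw [conjTranspose_apply, hA i hi]
          simp
        · intro hc'
          exact absurd (Finset.mem_univ K) hc'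
      rw [hu1, Matrix.one_apply_eq] at h1
      exact h1.symm
    set a : ℂ := starRingEnd ℂ c - 1 with ha
    set r : Matrix (Fin (m+1)) (Fin (m+1)) ℂ := 1 + a • E with hr
    have hrH : rᴴ = 1 + starRingEnd ℂ a • E := by
      rw [hr, conjTranspose_add, conjTranspose_one, conjTranspose_smul, hEH]
      rfl
    have hrr : rᴴ * r = 1 := by
      rw [hrH, hr]
      simp only [mul_add, add_mul, one_mul, mul_one, smul_mul_assoc, mul_smul_comm, smul_smul, hEE]
      match_scalars
      · ring
      · rw [ha]
        have : starRingEnd ℂ (starRingEnd ℂ c - 1) = c - 1 := by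
          simp [map_sub]
        rw [this]
        linear_combination hc
    refine ⟨r * u₀, (‖c - 1‖ : ℂ) • (u₀ᴴ * (E * u₀)), ?_, ?_, ?_, ?_, ?_⟩
    · rw [sandwich_conj, hrr, one_mul, hu1]
    · intro i
      have step1 : (r * u₀) i K = c * r i K := by
        rw [mul_apply]
        calc ∑ l, r i l * u₀ l K = ∑ l, (if l = K then c * r i l else 0) := by
              refine Finset.sum_congr rfl fun l _ => ?_
              rw [hxi l]
              by_cases hl : l = K
              · rw [if_pos hl, hl, heK]; ring
              · rw [if_neg hl, heNe l hl]; ring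
          _ = c * r i K := by rw [Finset.sum_ite_eq']; simp
      rw [step1]
      have hriK : r i K = (if i = K then 1 else 0) + a * e i := by
        rw [hr]
        simp [Matrix.add_apply, Matrix.one_apply, hE, vecMulVec_apply, hse, he]
      rw [hriK]
      by_cases hi : i = K
      · rw [hi, if_pos rfl, heK, ha]
        linear_combination hc
      · rw [if_neg hi, heNe i hi]
        ring
    · -- PosSemidef
      set β : ℝ := ‖c - 1‖ with hβ
      have hβ0 : (0:ℝ) ≤ β := norm_nonneg _
      set y : Matrix (Fin (m+1)) (Fin (m+1)) ℂ := (Real.sqrt β : ℂ) • (E * u₀) with hy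
      have hyy : yᴴ * y = (β : ℂ) • (u₀ᴴ * (E * u₀)) := by
        rw [hy, Matrix.conjTranspose_smul, Matrix.conjTranspose_mul, hEH]
        rw [smul_mul_assoc, mul_smul_comm, smul_smul]
        have hs : star ((Real.sqrt β : ℂ)) * (Real.sqrt β : ℂ) = (β : ℂ) := by
          rw [Complex.star_def, Complex.conj_ofReal, ← Complex.ofReal_mul,
            Real.mul_self_sqrt hβ0]
        rw [hs]
        congr 1
        rw [Matrix.mul_assoc, ← Matrix.mul_assoc E E u₀, hEE]
      rw [← hyy]
      exact Matrix.posSemidef_conjTranspose_mul_self y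
    · -- B ^ 2
      have hwu : r * u₀ - u₀ = a • (E * u₀) := by
        rw [hr, add_mul, one_mul, smul_mul_assoc, add_sub_cancel_left]
      rw [hwu]
      have hMM : (u₀ᴴ * (E * u₀)) * (u₀ᴴ * (E * u₀)) = u₀ᴴ * (E * u₀) := by
        rw [sandwich_mul u₀ E E hu2, hEE]
      have hconja : starRingEnd ℂ a = c - 1 := by rw [ha]; simp
      have hRHS : (a • (E * u₀))ᴴ * (a • (E * u₀))
          = (starRingEnd ℂ a * a) • (u₀ᴴ * (E * u₀)) := by
        rw [Matrix.conjTranspose_smul, Matrix.conjTranspose_mul, hEH]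
        rw [smul_mul_assoc, mul_smul_comm, smul_smul]
        congr 1
        rw [Matrix.mul_assoc, ← Matrix.mul_assoc E E u₀, hEE]
      rw [hRHS]
      rw [pow_two, smul_mul_assoc, mul_smul_comm, smul_smul, hMM]
      congr 1
      rw [hconja, ha]
      calc ((‖c - 1‖ : ℝ):ℂ) * ((‖c - 1‖ : ℝ):ℂ) = ((‖c - 1‖ * ‖c - 1‖ : ℝ):ℂ) := by push_cast; ring
        _ = ((Complex.normSq (c - 1) : ℝ):ℂ) := by
            rw [Complex.normSq_eq_norm_sq, sq]
        _ = (c - 1) * starRingEnd ℂ (c - 1) := (Complex.mul_conj _).symm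
        _ = (c - 1) * (starRingEnd ℂ c - 1) := by simp
    · -- trace
      have htr1 : (u₀ᴴ * (E * u₀)).trace = 1 := by
        rw [← Matrix.mul_assoc, Matrix.trace_mul_comm, ← Matrix.mul_assoc, hu2, one_mul,
          hE, vmv_trace, hee]
      rw [Matrix.trace_smul, htr1, smul_eq_mul, mul_one]
      rw [Complex.ofReal_re]
      have hnc : ‖c‖ = 1 := by
        have hc' := hc
        rw [mul_comm, Complex.mul_conj] at hc'
        have h2 : Complex.normSq c = 1 := by exact_mod_cast hc'
        rw [Complex.norm_def, h2, Real.sqrt_one]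
      calc ‖c - 1‖ ≤ ‖c‖ + ‖(1:ℂ)‖ := norm_sub_le c 1
        _ ≤ 4 := by rw [hnc, norm_one]; norm_num

  ·
    push_neg at hA
    obtain ⟨i₀, hi₀K, hi₀⟩ := hA
    set K := Fin.last m with hK
    set e : Fin (m+1) → ℂ := fun i => if i = K then 1 else 0 with he
    have hse : star e = e := by
      funext i
      by_cases hi : i = K <;> simp [he, hi]
    set c : ℂ := u₀ K K with hc_def
    have heK : e K = 1 := by simp [he]
    have heNe : ∀ i, i ≠ K → e i = 0 := fun i hi => by simp [he, hi]
    have hee : star e ⬝ᵥ e = 1 := by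
      rw [hse]
      simp [dotProduct, he]
    -- the orthogonal part of the K-th column
    set ζ : Fin (m+1) → ℂ := fun i => if i = K then 0 else u₀ i K with hζ
    set σ : ℝ := ∑ i, Complex.normSq (ζ i) with hσdef
    have hσpos : 0 < σ := by
      rw [hσdef]
      refine Finset.sum_pos' (fun i _ => Complex.normSq_nonneg _) ⟨i₀, Finset.mem_univ _, ?_⟩
      have : ζ i₀ = u₀ i₀ K := by rw [hζ]; simp [hi₀K]
      rw [this]
      exact Complex.normSq_pos.mpr hi₀
    set s : ℝ := Real.sqrt σ with hsdef
    have hs0 : 0 < s := Real.sqrt_pos.mpr hσpos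
    have hss : s * s = σ := Real.mul_self_sqrt hσpos.le
    have hsne : ((s:ℝ):ℂ) ≠ 0 := by exact_mod_cast hs0.ne'
    set f : Fin (m+1) → ℂ := fun i => ((s:ℝ):ℂ)⁻¹ * ζ i with hf
    have hfK : f K = 0 := by rw [hf]; simp [hζ]
    have hef : star e ⬝ᵥ f = 0 := by
      rw [hse, dotProduct]
      rw [Finset.sum_eq_single K]
      · rw [heK, one_mul, hfK]
      · intro i _ hi
        rw [heNe i hi, zero_mul]
      · intro hc'
        exact absurd (Finset.mem_univ K) hc'
    have hfe : star f ⬝ᵥ e = 0 := by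
      rw [dotProduct]
      rw [Finset.sum_eq_single K]
      · rw [heK, mul_one, Pi.star_apply, hfK, star_zero]
      · intro i _ hi
        rw [heNe i hi, mul_zero]
      · intro hc'
        exact absurd (Finset.mem_univ K) hc'
    have hff : star f ⬝ᵥ f = 1 := by
      rw [dotProduct]
      have h1 : ∀ i, star f i * f i = (((s*s)⁻¹ * Complex.normSq (ζ i) : ℝ):ℂ) := by
        intro i
        rw [Pi.star_apply, Complex.star_def, mul_comm ((starRingEnd ℂ) (f i)) (f i)]
        rw [Complex.mul_conj, hf]
        push_cast
        rw [_root_.map_mul, map_inv₀, Complex.normSq_ofReal]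
        push_cast
        ring
      simp only [h1]
      rw [← Complex.ofReal_sum, ← Finset.mul_sum, ← hσdef, hss, inv_mul_cancel₀ hσpos.ne']
      norm_num
    have hxi : ∀ i, u₀ i K = c * e i + ((s:ℝ):ℂ) * f i := by
      intro i
      by_cases hi : i = K
      · rw [hi, heK, hfK, mul_one, mul_zero, add_zero, hc_def]
      · rw [heNe i hi, mul_zero, zero_add, hf, ← mul_assoc, mul_inv_cancel₀ hsne, one_mul]
        simp [hζ, hi]
    have hxifun : (fun l => u₀ l K) = c • e + ((s:ℝ):ℂ) • f := funext fun i => by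
      rw [hxi i]; rfl
    have hcol1 : star (fun l => u₀ l K) ⬝ᵥ (fun l => u₀ l K) = 1 := by
      have h0 : (u₀ᴴ * u₀) K K = (1 : Matrix (Fin (m+1)) (Fin (m+1)) ℂ) K K := by rw [hu1]
      rw [Matrix.one_apply_eq] at h0
      rw [← h0, mul_apply]
      simp [dotProduct, conjTranspose_apply]
    have hc : starRingEnd ℂ c * c + ((s:ℝ):ℂ) * ((s:ℝ):ℂ) = 1 := by
      rw [hxifun] at hcol1
      simp only [star_add, star_smul, add_dotProduct, dotProduct_add, smul_dotProduct,
        dotProduct_smul, smul_eq_mul, hee, hef, hfe, hff, mul_one, mul_zero, add_zero, zero_add,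
        Complex.star_def, Complex.conj_ofReal] at hcol1
      linear_combination hcol1
    -- the rank-two rotation
    set E : Matrix (Fin (m+1)) (Fin (m+1)) ℂ := vecMulVec e (star e) with hE
    set F : Matrix (Fin (m+1)) (Fin (m+1)) ℂ := vecMulVec f (star f) with hF
    set G : Matrix (Fin (m+1)) (Fin (m+1)) ℂ := vecMulVec e (star f) with hG
    set G' : Matrix (Fin (m+1)) (Fin (m+1)) ℂ := vecMulVec f (star e) with hG'
    set r : Matrix (Fin (m+1)) (Fin (m+1)) ℂ :=
      1 + (starRingEnd ℂ c - 1) • E + ((s:ℝ):ℂ) • G + (-((s:ℝ):ℂ)) • G' + (c - 1) • F with hr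
    have hrH : rᴴ = 1 + (c - 1) • E + ((s:ℝ):ℂ) • G' + (-((s:ℝ):ℂ)) • G
        + (starRingEnd ℂ c - 1) • F := by
      rw [hr]
      simp only [conjTranspose_add, conjTranspose_smul, conjTranspose_one, hE, hF, hG, hG',
        vmv_conjT, star_sub, star_one, Complex.star_def, Complex.conj_conj, Complex.conj_ofReal,
        star_neg]
    have hrr : rᴴ * r = 1 := by
      rw [hrH, hr]
      simp only [mul_add, add_mul, one_mul, mul_one, smul_mul_assoc, mul_smul_comm, smul_smul,
        hE, hF, hG, hG', vmv_mul_vmv, hee, hef, hfe, hff, one_smul, zero_smul, smul_zero,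
        add_zero, zero_add]
      match_scalars
      any_goals ring1
      all_goals linear_combination hc
    -- the column condition for w = r * u₀
    have hre : r.mulVec e = (starRingEnd ℂ c) • e + (-((s:ℝ):ℂ)) • f := by
      rw [hr]
      simp only [Matrix.add_mulVec, Matrix.smul_mulVec, Matrix.one_mulVec,
        hE, hF, hG, hG', vmv_mulVec, hee, hef, hfe, hff, one_smul, zero_smul, smul_zero,
        add_zero, zero_add, smul_smul]
      match_scalars <;> ring
    have hrf : r.mulVec f = ((s:ℝ):ℂ) • e + c • f := by
      rw [hr]
      simp only [Matrix.add_mulVec, Matrix.smul_mulVec, Matrix.one_mulVec,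
        hE, hF, hG, hG', vmv_mulVec, hee, hef, hfe, hff, one_smul, zero_smul, smul_zero,
        add_zero, zero_add, smul_smul]
      match_scalars <;> ring
    have hwcol : ∀ i, (r * u₀) i K = if i = K then 1 else 0 := by
      intro i
      have h1 : (r * u₀) i K = (r.mulVec (fun l => u₀ l K)) i := rfl
      rw [h1, hxifun, Matrix.mulVec_add, Matrix.mulVec_smul, Matrix.mulVec_smul, hre, hrf]
      simp only [Pi.add_apply, Pi.smul_apply, smul_eq_mul]
      by_cases hi : i = K
      · rw [hi, heK, hfK, if_pos rfl]
        linear_combination hc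
      · rw [heNe i hi, if_neg hi]
        ring
    -- the perturbation
    have hD : r - 1 = (starRingEnd ℂ c - 1) • E + ((s:ℝ):ℂ) • G + (-((s:ℝ):ℂ)) • G'
        + (c - 1) • F := by
      rw [hr]; abel
    have hDH : (r - 1)ᴴ = (c - 1) • E + ((s:ℝ):ℂ) • G' + (-((s:ℝ):ℂ)) • G
        + (starRingEnd ℂ c - 1) • F := by
      rw [conjTranspose_sub, conjTranspose_one, hrH]; abel
    have hDD : (r - 1)ᴴ * (r - 1) = (2 - c - starRingEnd ℂ c) • (E + F) := by
      rw [hDH, hD]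
      simp only [mul_add, add_mul, smul_mul_assoc, mul_smul_comm, smul_smul,
        hE, hF, hG, hG', vmv_mul_vmv, hee, hef, hfe, hff, one_smul, zero_smul, smul_zero,
        add_zero, zero_add, smul_add]
      match_scalars
      any_goals ring1
      all_goals linear_combination hc
    -- facts about P = E + F
    have hPH : (E + F)ᴴ = E + F := by
      rw [conjTranspose_add, hE, hF, vmv_conjT, vmv_conjT]
    have hPP : (E + F) * (E + F) = E + F := by
      simp only [mul_add, add_mul, hE, hF, vmv_mul_vmv, hee, hef, hfe, hff, one_smul,
        zero_smul, smul_zero, add_zero, zero_add]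
    -- real-part bounds
    have hnsq : Complex.normSq c + s * s = 1 := by
      have h1 := hc
      rw [mul_comm ((starRingEnd ℂ) c) c, Complex.mul_conj, ← Complex.ofReal_mul] at h1
      exact_mod_cast h1
    have hresq : c.re * c.re + c.im * c.im + s * s = 1 := by
      rw [← Complex.normSq_apply]; exact hnsq
    have hre1 : c.re ≤ 1 := by nlinarith [sq_nonneg c.im, sq_nonneg (c.re - 1), hss, hσpos]
    have hre2 : -1 ≤ c.re := by nlinarith [sq_nonneg c.im, sq_nonneg (c.re + 1), hss, hσpos]
    set t : ℝ := Real.sqrt (2 - 2 * c.re) with ht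
    have ht0 : 0 ≤ t := Real.sqrt_nonneg _
    have htt : t * t = 2 - 2 * c.re := Real.mul_self_sqrt (by linarith)
    have ht2 : ((t:ℝ):ℂ) * ((t:ℝ):ℂ) = 2 - c - starRingEnd ℂ c := by
      rw [← Complex.ofReal_mul, htt, sub_sub, Complex.add_conj]
      push_cast
      ring
    have htle : t ≤ 2 := by
      nlinarith [htt, ht0]
    refine ⟨r * u₀, ((t:ℝ):ℂ) • (u₀ᴴ * ((E + F) * u₀)), ?_, hwcol, ?_, ?_, ?_⟩
    · rw [sandwich_conj, hrr, one_mul, hu1]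
    · -- PosSemidef
      set y : Matrix (Fin (m+1)) (Fin (m+1)) ℂ := (Real.sqrt t : ℂ) • ((E + F) * u₀) with hy
      have hyy : yᴴ * y = ((t:ℝ):ℂ) • (u₀ᴴ * ((E + F) * u₀)) := by
        rw [hy, Matrix.conjTranspose_smul, Matrix.conjTranspose_mul, hPH]
        rw [smul_mul_assoc, mul_smul_comm, smul_smul]
        have hsq : star ((Real.sqrt t : ℝ):ℂ) * ((Real.sqrt t : ℝ):ℂ) = ((t:ℝ):ℂ) := by
          rw [Complex.star_def, Complex.conj_ofReal, ← Complex.ofReal_mul,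
            Real.mul_self_sqrt ht0]
        rw [hsq]
        congr 1
        rw [Matrix.mul_assoc, ← Matrix.mul_assoc (E + F) (E + F) u₀, hPP]
      rw [← hyy]
      exact Matrix.posSemidef_conjTranspose_mul_self y
    · -- B ^ 2
      have hwu : r * u₀ - u₀ = (r - 1) * u₀ := by rw [Matrix.sub_mul, one_mul]
      rw [hwu, sandwich_conj, hDD]
      rw [pow_two, smul_mul_assoc, mul_smul_comm, smul_smul,
        sandwich_mul u₀ (E+F) (E+F) hu2, hPP, ht2, smul_mul_assoc, mul_smul_comm]
    · -- trace
      have htr1 : (u₀ᴴ * ((E + F) * u₀)).trace = 2 := by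
        rw [← Matrix.mul_assoc, Matrix.trace_mul_comm, ← Matrix.mul_assoc, hu2, one_mul,
          Matrix.trace_add, hE, hF, vmv_trace, vmv_trace, hee, hff]
        norm_num
      rw [Matrix.trace_smul, htr1, smul_eq_mul]
      have hcast : ((t:ℝ):ℂ) * 2 = (((2*t:ℝ)):ℂ) := by push_cast; ring
      rw [hcast, Complex.ofReal_re]
      linarith [htle]
end

section
/- Let u be an n×n unitary matrix and suppose there is a unitary w acting on a 2-dimensional subspace X ⊆ ℂⁿ such that v := (1_{X^⊥} ⊕ w)·u* fixes a given unit vector. Then ‖1 - v·u‖₁ ≤ 4/n, where ‖·‖₁ is the normalized trace norm. -/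
open Matrix
open scoped ComplexOrder

/-- Trace of the positive square root equals the sum of square roots of eigenvalues. -/
lemma trace_sqrt_eq {n : ℕ} {A : Matrix (Fin n) (Fin n) ℂ} (hA : A.PosSemidef) :
    ((hA.1.eigenvectorUnitary : Matrix (Fin n) (Fin n) ℂ) *
      diagonal ((Complex.ofReal) ∘ Real.sqrt ∘ hA.1.eigenvalues) *
      (star hA.1.eigenvectorUnitary : Matrix (Fin n) (Fin n) ℂ)).trace = ∑ i, ((Real.sqrt (hA.1.eigenvalues i) : ℝ) : ℂ) := by
  show (hA.1.eigenvectorUnitary.1 * Matrix.diagonal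
      ((Complex.ofReal) ∘ Real.sqrt ∘ hA.1.eigenvalues) *
      (star hA.1.eigenvectorUnitary : Matrix (Fin n) (Fin n) ℂ)).trace = _
  rw [Matrix.trace_mul_cycle, Matrix.UnitaryGroup.star_mul_self,
    Matrix.one_mul, Matrix.trace_diagonal]
  rfl

/-- The image of a unitary matrix under `toEuclideanCLM` is unitary. -/
lemma unitary_clm_mem {n : ℕ} (p : Matrix.unitaryGroup (Fin n) ℂ) :
    Matrix.toEuclideanCLM (𝕜 := ℂ) (p : Matrix (Fin n) (Fin n) ℂ) ∈
      unitary (EuclideanSpace ℂ (Fin n) →L[ℂ] EuclideanSpace ℂ (Fin n)) := by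
  constructor
  · rw [← map_star (Matrix.toEuclideanCLM (𝕜 := ℂ)), ← _root_.map_mul,
      Matrix.UnitaryGroup.star_mul_self, _root_.map_one]
  · rw [← map_star (Matrix.toEuclideanCLM (𝕜 := ℂ)), ← _root_.map_mul, p.2.2,
      _root_.map_one]

/-- The eigenvalues of `(1-p)ᴴ(1-p)` are at most `4` for a unitary `p`. -/
lemma eig_le_four {n : ℕ} (p : Matrix.unitaryGroup (Fin n) ℂ)
    (ha : (((1 : Matrix (Fin n) (Fin n) ℂ) - (p : Matrix (Fin n) (Fin n) ℂ))ᴴ *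
      ((1 : Matrix (Fin n) (Fin n) ℂ) - (p : Matrix (Fin n) (Fin n) ℂ))).PosSemidef)
    (i : Fin n) :
    ha.1.eigenvalues i ≤ 4 := by
  set x : Matrix (Fin n) (Fin n) ℂ := 1 - (p : Matrix (Fin n) (Fin n) ℂ) with hx
  set W : EuclideanSpace ℂ (Fin n) := ha.1.eigenvectorBasis i with hW
  have hWnorm : ‖W‖ = 1 := ha.1.eigenvectorBasis.orthonormal.1 i
  have key : ha.1.eigenvalues i = ‖Matrix.toEuclideanCLM (𝕜 := ℂ) x W‖ ^ 2 := by
    rw [ha.1.eigenvalues_eq i]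
    have h1 : (xᴴ * x) *ᵥ ⇑(ha.1.eigenvectorBasis i) =
        xᴴ *ᵥ (x *ᵥ ⇑(ha.1.eigenvectorBasis i)) := (Matrix.mulVec_mulVec _ _ _).symm
    rw [h1, Matrix.dotProduct_mulVec, ← Matrix.star_mulVec]
    have h2 : star (x *ᵥ ⇑(ha.1.eigenvectorBasis i)) ⬝ᵥ (x *ᵥ ⇑(ha.1.eigenvectorBasis i)) =
        inner (𝕜 := ℂ) (Matrix.toEuclideanCLM (𝕜 := ℂ) x W)
          (Matrix.toEuclideanCLM (𝕜 := ℂ) x W) := by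
      rw [EuclideanSpace.inner_eq_star_dotProduct, dotProduct_comm]
      rfl
    rw [h2]
    exact inner_self_eq_norm_sq _
  rw [key]
  have hb : ‖Matrix.toEuclideanCLM (𝕜 := ℂ) x W‖ ≤ 2 := by
    have hsplit : Matrix.toEuclideanCLM (𝕜 := ℂ) x =
        1 - Matrix.toEuclideanCLM (𝕜 := ℂ) (p : Matrix (Fin n) (Fin n) ℂ) := by
      rw [hx, map_sub, _root_.map_one]
    rw [hsplit]
    calc ‖(1 - Matrix.toEuclideanCLM (𝕜 := ℂ) (p : Matrix (Fin n) (Fin n) ℂ)) W‖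
        = ‖W - Matrix.toEuclideanCLM (𝕜 := ℂ) (p : Matrix (Fin n) (Fin n) ℂ) W‖ := by
          simp
      _ ≤ ‖W‖ + ‖Matrix.toEuclideanCLM (𝕜 := ℂ) (p : Matrix (Fin n) (Fin n) ℂ) W‖ :=
          norm_sub_le _ _
      _ = 2 := by
          rw [ContinuousLinearMap.norm_map_of_mem_unitary (unitary_clm_mem p), hWnorm]; norm_num
  calc ‖Matrix.toEuclideanCLM (𝕜 := ℂ) x W‖ ^ 2 ≤ 2 ^ 2 :=
        pow_le_pow_left₀ (norm_nonneg _) hb 2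
    _ = 4 := by norm_num

/-- If `p` is unitary and acts as the identity on `Xᗮ` with `finrank X = 2`,
then `1 - p` has rank at most `2`. -/
lemma rank_le_two {n : ℕ} (X : Submodule ℂ (EuclideanSpace ℂ (Fin n)))
    (hX : Module.finrank ℂ X = 2)
    (p : Matrix.unitaryGroup (Fin n) ℂ)
    (hp_perp : ∀ ζ ∈ Xᗮ, Matrix.toEuclideanCLM (𝕜 := ℂ) (p : Matrix (Fin n) (Fin n) ℂ) ζ = ζ) :
    ((1 : Matrix (Fin n) (Fin n) ℂ) - (p : Matrix (Fin n) (Fin n) ℂ)).rank ≤ 2 := by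
  set x : Matrix (Fin n) (Fin n) ℂ := 1 - (p : Matrix (Fin n) (Fin n) ℂ) with hx
  have hrank : x.rank = Module.finrank ℂ (LinearMap.range (Matrix.toEuclideanLin x)) := by
    rw [Matrix.rank_eq_finrank_range_toLin x (EuclideanSpace.basisFun (Fin n) ℂ).toBasis
      (EuclideanSpace.basisFun (Fin n) ℂ).toBasis, Matrix.toEuclideanLin_eq_toLin_orthonormal]
  have hker : Xᗮ ≤ LinearMap.ker (Matrix.toEuclideanLin x) := by
    intro ζ hζ
    rw [LinearMap.mem_ker, ← Matrix.coe_toEuclideanCLM_eq_toEuclideanLin]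
    show Matrix.toEuclideanCLM (𝕜 := ℂ) x ζ = 0
    have hsplit : Matrix.toEuclideanCLM (𝕜 := ℂ) x =
        1 - Matrix.toEuclideanCLM (𝕜 := ℂ) (p : Matrix (Fin n) (Fin n) ℂ) := by
      rw [hx, map_sub, _root_.map_one]
    rw [hsplit]
    simp [hp_perp ζ hζ]
  have h1 : Module.finrank ℂ (LinearMap.range (Matrix.toEuclideanLin x)) +
      Module.finrank ℂ (LinearMap.ker (Matrix.toEuclideanLin x)) = n := by
    rw [LinearMap.finrank_range_add_finrank_ker]
    simp
  have h2 : Module.finrank ℂ Xᗮ ≤ Module.finrank ℂ (LinearMap.ker (Matrix.toEuclideanLin x)) :=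
    Submodule.finrank_mono hker
  have h3 : Module.finrank ℂ X + Module.finrank ℂ Xᗮ = n := by
    rw [Submodule.finrank_add_finrank_orthogonal]
    simp
  rw [hrank]
  omega

/-- if `v = (1_{X^⊥} ⊕ w)·u*` (with `w` a unitary of the 2-dimensional
subspace `X`) fixes some unit vector, then `‖1 - v·u‖₁ ≤ 4/n`. -/
theorem trNorm_one_sub_vu_le (n : ℕ)
    (u : Matrix.unitaryGroup (Fin n) ℂ)
    (X : Submodule ℂ (EuclideanSpace ℂ (Fin n))) (hX : Module.finrank ℂ X = 2)
    (p : Matrix.unitaryGroup (Fin n) ℂ)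
    (hp_perp : ∀ ζ ∈ Xᗮ, Matrix.toEuclideanCLM (𝕜 := ℂ) (p : Matrix (Fin n) (Fin n) ℂ) ζ = ζ)
    (hp_X : ∀ ζ ∈ X, Matrix.toEuclideanCLM (𝕜 := ℂ) (p : Matrix (Fin n) (Fin n) ℂ) ζ ∈ X)
    (v : Matrix (Fin n) (Fin n) ℂ)
    (hv : v = (p : Matrix (Fin n) (Fin n) ℂ) * (u : Matrix (Fin n) (Fin n) ℂ)ᴴ)
    (e : EuclideanSpace ℂ (Fin n)) (he : ‖e‖ = 1)
    (hfix : Matrix.toEuclideanCLM (𝕜 := ℂ) v e = e) :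
    trNorm (1 - v * (u : Matrix (Fin n) (Fin n) ℂ)) ≤ 4 / n := by
  classical
  have huu : (u : Matrix (Fin n) (Fin n) ℂ)ᴴ * (u : Matrix (Fin n) (Fin n) ℂ) = 1 := by
    rw [← Matrix.star_eq_conjTranspose]
    exact Matrix.UnitaryGroup.star_mul_self u
  have hvu : v * (u : Matrix (Fin n) (Fin n) ℂ) = (p : Matrix (Fin n) (Fin n) ℂ) := by
    rw [hv, Matrix.mul_assoc, huu, Matrix.mul_one]
  rw [hvu]
  set x : Matrix (Fin n) (Fin n) ℂ := 1 - (p : Matrix (Fin n) (Fin n) ℂ) with hx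
  have ha : (xᴴ * x).PosSemidef := Matrix.posSemidef_conjTranspose_mul_self x
  -- the number of nonzero eigenvalues is at most 2
  have hcard : Fintype.card {i // ha.1.eigenvalues i ≠ 0} ≤ 2 := by
    rw [← ha.1.rank_eq_card_non_zero_eigs, Matrix.rank_conjTranspose_mul_self]
    exact rank_le_two X hX p hp_perp
  -- the sum of square roots of eigenvalues is at most 4
  have hsum : ∑ i, Real.sqrt (ha.1.eigenvalues i) ≤ 4 := by
    have hfilter : ∑ i, Real.sqrt (ha.1.eigenvalues i) =
        ∑ i ∈ Finset.univ.filter (fun i => ha.1.eigenvalues i ≠ 0),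
          Real.sqrt (ha.1.eigenvalues i) := by
      symm
      apply Finset.sum_subset (Finset.filter_subset _ _)
      intro i _ hi
      simp only [Finset.mem_filter, Finset.mem_univ, true_and, not_not] at hi
      rw [hi, Real.sqrt_zero]
    rw [hfilter]
    have hle2 : ∀ i ∈ Finset.univ.filter (fun i => ha.1.eigenvalues i ≠ 0),
        Real.sqrt (ha.1.eigenvalues i) ≤ 2 := by
      intro i _
      have h4 : ha.1.eigenvalues i ≤ 4 := eig_le_four p ha i
      calc Real.sqrt (ha.1.eigenvalues i) ≤ Real.sqrt 4 := Real.sqrt_le_sqrt h4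
        _ = 2 := by
          rw [show (4 : ℝ) = 2 ^ 2 by norm_num, Real.sqrt_sq (by norm_num : (0:ℝ) ≤ 2)]
    calc ∑ i ∈ Finset.univ.filter (fun i => ha.1.eigenvalues i ≠ 0),
          Real.sqrt (ha.1.eigenvalues i)
        ≤ (Finset.univ.filter (fun i => ha.1.eigenvalues i ≠ 0)).card • (2 : ℝ) :=
          Finset.sum_le_card_nsmul _ _ _ hle2
      _ = (Finset.univ.filter (fun i => ha.1.eigenvalues i ≠ 0)).card * 2 := by
          rw [nsmul_eq_mul]
      _ ≤ 2 * 2 := by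
          have : (Finset.univ.filter (fun i => ha.1.eigenvalues i ≠ 0)).card ≤ 2 := by
            rw [← Fintype.card_subtype]
            exact hcard
          exact mul_le_mul_of_nonneg_right (by exact_mod_cast this) (by norm_num)
      _ = 4 := by norm_num
  -- compute the trace norm
  have htrace : (mAbs x).trace = ∑ i, ((Real.sqrt (ha.1.eigenvalues i) : ℝ) : ℂ) :=
    trace_sqrt_eq ha
  have htre : (mAbs x).trace.re = ∑ i, Real.sqrt (ha.1.eigenvalues i) := by
    rw [htrace, Complex.re_sum]
    simp
  rw [trNorm, htre]
  calc (1 / (n : ℝ)) * ∑ i, Real.sqrt (ha.1.eigenvalues i)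
      ≤ (1 / (n : ℝ)) * 4 := by
        apply mul_le_mul_of_nonneg_left hsum
        positivity
    _ = 4 / n := by ring
end

section
/- Let 1 ≤ k ≤ n and let u ∈ O(k) be a k×k real orthogonal matrix. Then there exists a (k-1)×(k-1) orthogonal matrix v ∈ O(k-1) such that the normalized trace distance in M_n(ℝ) between v ⊕ 1_{n-k+1} and u ⊕ 1_{n-k} is at most 4/n. -/
open Matrix

/-- The absolute value `|x| = (xᵀx)^{1/2}` of a real matrix. -/
noncomputable def mAbsR {n : ℕ} (x : Matrix (Fin n) (Fin n) ℝ) : Matrix (Fin n) (Fin n) ℝ :=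
  ((Matrix.posSemidef_conjTranspose_mul_self x).1.eigenvectorUnitary : Matrix (Fin n) (Fin n) ℝ) *
    diagonal ((↑) ∘ (√·) ∘ (Matrix.posSemidef_conjTranspose_mul_self x).1.eigenvalues) *
    (star (Matrix.posSemidef_conjTranspose_mul_self x).1.eigenvectorUnitary : Matrix (Fin n) (Fin n) ℝ)

/-- The normalized trace norm on real matrices. -/
noncomputable def trNormR {n : ℕ} (x : Matrix (Fin n) (Fin n) ℝ) : ℝ :=
  (1 / (n : ℝ)) * (mAbsR x).trace

/-- Block-diagonal padding `u ⊕ 1_{n-k}` for real matrices. -/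
def padR {k n : ℕ} (_h : k ≤ n) (u : Matrix (Fin k) (Fin k) ℝ) : Matrix (Fin n) (Fin n) ℝ :=
  fun i j =>
    if hi : (i : ℕ) < k then (if hj : (j : ℕ) < k then u ⟨i, hi⟩ ⟨j, hj⟩ else 0)
    else (if (i : ℕ) = (j : ℕ) then 1 else 0)

lemma sum_castLE {k n : ℕ} (hkn : k ≤ n) (g : Fin n → ℝ)
    (hg : ∀ i : Fin n, k ≤ (i : ℕ) → g i = 0) :
    ∑ i : Fin n, g i = ∑ i : Fin k, g (Fin.castLE hkn i) := by
  classical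
  let f : ℕ → ℝ := fun m => if h : m < n then g ⟨m, h⟩ else 0
  have h1 : ∑ i : Fin n, g i = ∑ m ∈ Finset.range n, f m := by
    rw [← Fin.sum_univ_eq_sum_range]
    refine Finset.sum_congr rfl fun i _ => ?_
    simp [f, i.isLt]
  have h2 : ∑ i : Fin k, g (Fin.castLE hkn i) = ∑ m ∈ Finset.range k, f m := by
    rw [← Fin.sum_univ_eq_sum_range]
    refine Finset.sum_congr rfl fun i _ => ?_
    have : (i : ℕ) < n := lt_of_lt_of_le i.isLt hkn
    simp only [f, dif_pos this]
    rfl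
  rw [h1, h2]
  refine (Finset.sum_subset (Finset.range_subset_range.2 hkn) ?_).symm
  intro m hm hmk
  simp only [Finset.mem_range] at hm hmk
  simp only [f, dif_pos hm]
  exact hg ⟨m, hm⟩ (le_of_not_gt hmk)

lemma block_exists {k n : ℕ} (hk : 1 ≤ k) (hkn : k ≤ n)
    (W : Matrix (Fin k) (Fin k) ℝ) (hW1 : Wᵀ * W = 1)
    (hcol : ∀ i : Fin k, W i ⟨k - 1, by omega⟩ = if (i : ℕ) = k - 1 then 1 else 0) :
    ∃ v : Matrix.orthogonalGroup (Fin (k - 1)) ℝ,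
      padR (le_trans (Nat.sub_le k 1) hkn) (v : Matrix (Fin (k-1)) (Fin (k-1)) ℝ)
        = padR hkn W := by
  classical
  set ℓ : Fin k := ⟨k - 1, by omega⟩ with hℓ
  have hrow : ∀ j : Fin k, W ℓ j = if (k - 1 : ℕ) = (j : ℕ) then 1 else 0 := by
    intro j
    have h1 : (Wᵀ * W) ℓ j = ∑ m : Fin k, W m ℓ * W m j := by
      simp [Matrix.mul_apply, Matrix.transpose_apply]
    have h2 : ∑ m : Fin k, W m ℓ * W m j = W ℓ j := by
      rw [Finset.sum_eq_single ℓ]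
      · rw [hcol ℓ]; simp [hℓ]
      · intro m _ hm
        rw [hcol m]
        have : (m : ℕ) ≠ k - 1 := fun h => hm (Fin.ext (by simp [hℓ, h]))
        simp [this]
      · simp
    have h3 : (Wᵀ * W) ℓ j = if ℓ = j then 1 else 0 := by rw [hW1, Matrix.one_apply]
    have h4 : (ℓ = j) ↔ ((k - 1 : ℕ) = (j : ℕ)) := by
      constructor
      · intro h; rw [← h]
      · intro h; exact Fin.ext (by simpa [hℓ] using h)
    rw [← h2, ← h1, h3]
    simp [h4]
  set v : Matrix (Fin (k - 1)) (Fin (k - 1)) ℝ :=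
    fun i j => W (Fin.castLE (Nat.sub_le k 1) i) (Fin.castLE (Nat.sub_le k 1) j) with hv
  have hvmem : v ∈ Matrix.orthogonalGroup (Fin (k - 1)) ℝ := by
    rw [Matrix.mem_orthogonalGroup_iff']
    ext i j
    have hstar : (vᵀ * v) i j = ∑ m : Fin (k - 1), v m i * v m j := by
      simp [Matrix.mul_apply, Matrix.star_eq_conjTranspose, Matrix.conjTranspose_apply]
    rw [hstar]
    have hsum : ∑ m : Fin k, W m (Fin.castLE (Nat.sub_le k 1) i) * W m (Fin.castLE (Nat.sub_le k 1) j)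
        = ∑ m : Fin (k - 1), v m i * v m j := by
      rw [sum_castLE (Nat.sub_le k 1)
        (fun m => W m (Fin.castLE (Nat.sub_le k 1) i) * W m (Fin.castLE (Nat.sub_le k 1) j))]
      intro m hm
      have hm' : (m : ℕ) = k - 1 := by omega
      have : m = ℓ := Fin.ext (by simp [hℓ, hm'])
      rw [this, hrow]
      have : (k - 1 : ℕ) ≠ ((Fin.castLE (Nat.sub_le k 1) i : Fin k) : ℕ) := by
        have : ((Fin.castLE (Nat.sub_le k 1) i : Fin k) : ℕ) = (i : ℕ) := rfl
        omega
      rw [if_neg this, zero_mul]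
    rw [← hsum]
    have h1 : (Wᵀ * W) (Fin.castLE (Nat.sub_le k 1) i) (Fin.castLE (Nat.sub_le k 1) j)
        = ∑ m : Fin k, W m (Fin.castLE (Nat.sub_le k 1) i) * W m (Fin.castLE (Nat.sub_le k 1) j) := by
      simp [Matrix.mul_apply, Matrix.transpose_apply]
    rw [← h1, hW1]
    simp only [Matrix.one_apply]
    have : (Fin.castLE (Nat.sub_le k 1) i = Fin.castLE (Nat.sub_le k 1) j) ↔ i = j := by
      constructor
      · intro h; exact Fin.ext (by simpa using Fin.val_eq_val _ _ |>.2 h)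
      · intro h; rw [h]
    simp [this]
  refine ⟨⟨v, hvmem⟩, ?_⟩
  ext i j
  simp only [padR]
  by_cases hik : (i : ℕ) < k
  · by_cases hik1 : (i : ℕ) < k - 1
    · rw [dif_pos hik1, dif_pos hik]
      by_cases hjk1 : (j : ℕ) < k - 1
      · have hjk : (j : ℕ) < k := by omega
        rw [dif_pos hjk1, dif_pos hjk]
        simp only [hv]
        congr 1
      · rw [dif_neg hjk1]
        by_cases hjk : (j : ℕ) < k
        · rw [dif_pos hjk]
          have hj' : (j : ℕ) = k - 1 := by omega
          have : (⟨(j : ℕ), hjk⟩ : Fin k) = ℓ := Fin.ext (by simp [hℓ, hj'])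
          rw [this, hcol]
          have : ((⟨(i : ℕ), hik⟩ : Fin k) : ℕ) ≠ k - 1 := by simpa using (by omega : (i:ℕ) ≠ k - 1)
          simp [this]
        · rw [dif_neg hjk]
    · rw [dif_neg hik1, dif_pos hik]
      have hi' : (i : ℕ) = k - 1 := by omega
      have hieq : (⟨(i : ℕ), hik⟩ : Fin k) = ℓ := Fin.ext (by simp [hℓ, hi'])
      by_cases hjk : (j : ℕ) < k
      · rw [dif_pos hjk, hieq, hrow]
        simp [hi']
      · rw [dif_neg hjk]
        have : (i : ℕ) ≠ (j : ℕ) := by omega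
        simp [this]
  · have hik1 : ¬ (i : ℕ) < k - 1 := by omega
    rw [dif_neg hik1, dif_neg hik]

/-- key trace computation: if the difference is `c • (dh ⊗ qh)` then we can compute the norm. -/
lemma trNorm_rank_one {n : ℕ} (x : Matrix (Fin n) (Fin n) ℝ) (dh qh : Fin n → ℝ) (c : ℝ)
    (hx : ∀ i j, x i j = c * (dh i * qh j))
    (hd : ∑ m : Fin n, dh m ^ 2 = 1) (hq : ∑ m : Fin n, qh m ^ 2 = 1) (hc : 0 ≤ c) :
    trNormR x = (n : ℝ)⁻¹ * c := by
  classical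
  set B : Matrix (Fin n) (Fin n) ℝ := fun i j => c * (qh i * qh j) with hB
  have hBpsd : B.PosSemidef := by
    refine Matrix.PosSemidef.of_dotProduct_mulVec_nonneg ?_ ?_
    · ext i j
      rw [Matrix.conjTranspose_apply]
      simp only [hB, Matrix.conjTranspose_apply, star_trivial]
      ring
    · intro y
      have : dotProduct (star y) (B *ᵥ y) = c * (∑ i, qh i * y i) ^ 2 := by
        simp only [dotProduct, Matrix.mulVec, hB, star_trivial, pow_two]
        rw [Finset.sum_mul_sum]
        rw [Finset.mul_sum]
        refine Finset.sum_congr rfl fun i _ => ?_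
        rw [Finset.mul_sum, Finset.mul_sum]
        refine Finset.sum_congr rfl fun j _ => ?_
        ring
      rw [this]
      exact mul_nonneg hc (sq_nonneg _)
  have hB2 : B * B = xᴴ * x := by
    ext i j
    have hL : (B * B) i j = c * c * (qh i * qh j) * ∑ m, qh m ^ 2 := by
      rw [Matrix.mul_apply]
      simp only [Matrix.mul_apply, hB]
      rw [Finset.mul_sum]
      refine Finset.sum_congr rfl fun m _ => ?_
      ring
    have hR : (xᴴ * x) i j = c * c * (qh i * qh j) * ∑ m, dh m ^ 2 := by
      simp only [Matrix.mul_apply, Matrix.conjTranspose_apply, star_trivial]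
      rw [Finset.mul_sum]
      refine Finset.sum_congr rfl fun m _ => ?_
      rw [hx m i, hx m j]
      ring
    rw [hL, hR, hd, hq]
  have habs : mAbsR x = B := by
    have hA := (Matrix.posSemidef_conjTranspose_mul_self x).1
    have e1 : mAbsR x = cfc Real.sqrt (xᴴ * x) := by
      rw [hA.cfc_eq, Matrix.IsHermitian.cfc, Unitary.conjStarAlgAut_apply]; rfl
    open scoped MatrixOrder in
    rw [e1, ← cfcₙ_eq_cfc, ← CFC.sqrt_eq_real_sqrt _ (Matrix.posSemidef_conjTranspose_mul_self x).nonneg]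
    open scoped MatrixOrder in
    exact CFC.sqrt_unique hB2 hBpsd.nonneg
  have htr : B.trace = c := by
    simp only [Matrix.trace, Matrix.diag, hB]
    rw [← Finset.mul_sum]
    have : ∑ i, qh i * qh i = 1 := by
      rw [← hq]; exact Finset.sum_congr rfl fun i _ => (pow_two _).symm
    rw [this, mul_one]
  rw [trNormR, habs, htr, one_div]

/-- the orthogonal-group version of Proposition 2. -/
theorem exists_orthogonal_close (k n : ℕ) (hk : 1 ≤ k) (hkn : k ≤ n)
    (u : Matrix.orthogonalGroup (Fin k) ℝ) :
    ∃ v : Matrix.orthogonalGroup (Fin (k - 1)) ℝ,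
      trNormR (padR (le_trans (Nat.sub_le k 1) hkn) (v : Matrix (Fin (k-1)) (Fin (k-1)) ℝ)
          - padR hkn (u : Matrix (Fin k) (Fin k) ℝ)) ≤ 4 / n := by
  classical
  set U : Matrix (Fin k) (Fin k) ℝ := (u : Matrix (Fin k) (Fin k) ℝ) with hUdef
  have hst : star U = Uᵀ := by
    ext i j
    simp [Matrix.star_eq_conjTranspose, Matrix.conjTranspose_apply]
  have hU1 : Uᵀ * U = 1 := by
    have := Iff.mp (Matrix.mem_orthogonalGroup_iff' (Fin k) ℝ) u.2
    exact this
  have hUU : U * Uᵀ = 1 := by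
    have := Iff.mp (Matrix.mem_orthogonalGroup_iff (Fin k) ℝ) u.2
    exact this
  have hn : (0 : ℝ) < n := by
    have : 1 ≤ n := le_trans hk hkn
    exact_mod_cast Nat.lt_of_lt_of_le Nat.zero_lt_one this
  set ℓ : Fin k := ⟨k - 1, by omega⟩ with hℓ
  set d : Fin k → ℝ := fun i => U i ℓ - (if i = ℓ then 1 else 0) with hd
  by_cases hd0 : d = 0
  · -- u already has the right block form
    have hcol : ∀ i : Fin k, U i ℓ = if (i : ℕ) = k - 1 then 1 else 0 := by
      intro i
      have : d i = 0 := by rw [hd0]; rfl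
      have h2 : U i ℓ = if i = ℓ then 1 else 0 := by
        have := sub_eq_zero.mp this
        simpa [hd] using this
      rw [h2]
      congr 1
      simp [hℓ, Fin.ext_iff]
    obtain ⟨v, hv⟩ := block_exists hk hkn U hU1 hcol
    refine ⟨v, ?_⟩
    rw [hv]
    have : padR hkn U - padR hkn U = 0 := sub_self _
    rw [this]
    have h0 : trNormR (0 : Matrix (Fin n) (Fin n) ℝ) = (n : ℝ)⁻¹ * 0 := by
      refine trNorm_rank_one 0 (fun i => if (i : ℕ) = 0 then 1 else 0)
        (fun i => if (i : ℕ) = 0 then 1 else 0) 0 (by simp) ?_ ?_ le_rfl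
      all_goals
        rw [Finset.sum_eq_single (⟨0, by omega⟩ : Fin n)]
        · simp
        · intro m _ hm
          have : (m : ℕ) ≠ 0 := fun h => hm (Fin.ext (by simpa using h))
          simp [this]
        · simp
    rw [h0, mul_zero]
    positivity
  · -- Householder reflection case
    set β : ℝ := ∑ i, d i ^ 2 with hβ
    have hβpos : 0 < β := by
      have hne : ∃ i, d i ≠ 0 := by
        by_contra h
        push_neg at h
        exact hd0 (funext h)
      obtain ⟨i0, hi0⟩ := hne
      have h1 : (0 : ℝ) < d i0 ^ 2 := by positivity
      have h2 : d i0 ^ 2 ≤ β := by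
        rw [hβ]
        exact Finset.single_le_sum (f := fun i => d i ^ 2) (fun i _ => sq_nonneg _)
          (Finset.mem_univ i0)
      linarith
    set q : Fin k → ℝ := fun j => ∑ m, d m * U m j with hq
    set W : Matrix (Fin k) (Fin k) ℝ := fun i j => U i j - (2 / β) * (d i * q j) with hW
    -- W = H * U with H the Householder reflection
    set H : Matrix (Fin k) (Fin k) ℝ :=
      fun i j => (if i = j then 1 else 0) - (2 / β) * (d i * d j) with hH
    have hWH : W = H * U := by
      ext i j
      rw [Matrix.mul_apply]
      simp only [hW, hH, Matrix.mul_apply, sub_mul]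
      rw [Finset.sum_sub_distrib]
      congr 1
      · simp [ite_mul]
      · rw [hq, Finset.mul_sum]
        rw [Finset.mul_sum]
        refine Finset.sum_congr rfl fun m _ => ?_
        ring
    have hHsymm : Hᵀ = H := by
      ext i j
      rw [Matrix.transpose_apply]
      simp only [hH, Matrix.transpose_apply]
      have : (j = i) ↔ (i = j) := eq_comm
      rw [if_congr this rfl rfl]
      ring_nf
    have hH2 : H * H = 1 := by
      ext i j
      rw [Matrix.mul_apply]
      simp only [Matrix.mul_apply, hH, Matrix.one_apply]
      have expand : ∀ m : Fin k,
          ((if i = m then 1 else 0) - 2 / β * (d i * d m)) *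
            ((if m = j then 1 else 0) - 2 / β * (d m * d j))
          = (if i = m then 1 else 0) * (if m = j then 1 else 0)
            - (if i = m then 1 else 0) * (2 / β * (d m * d j))
            - (2 / β * (d i * d m)) * (if m = j then 1 else 0)
            + (2 / β) * (2 / β) * (d i * d j) * d m ^ 2 := by
        intro m; ring
      rw [Finset.sum_congr rfl fun m _ => expand m]
      rw [Finset.sum_add_distrib, Finset.sum_sub_distrib, Finset.sum_sub_distrib]
      have e1 : ∑ m : Fin k, (if i = m then 1 else 0) * (if m = j then (1:ℝ) else 0)
          = if i = j then 1 else 0 := by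
        simp [ite_mul, Finset.sum_ite_eq]
      have e2 : ∑ m : Fin k, (if i = m then (1:ℝ) else 0) * (2 / β * (d m * d j))
          = 2 / β * (d i * d j) := by
        simp [ite_mul, Finset.sum_ite_eq]
      have e3 : ∑ m : Fin k, (2 / β * (d i * d m)) * (if m = j then (1:ℝ) else 0)
          = 2 / β * (d i * d j) := by
        simp [mul_ite, Finset.sum_ite_eq']
      have e4 : ∑ m : Fin k, (2 / β) * (2 / β) * (d i * d j) * d m ^ 2
          = (2 / β) * (2 / β) * (d i * d j) * β := by
        rw [← Finset.mul_sum, hβ]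
      rw [e1, e2, e3, e4]
      have hβne : β ≠ 0 := ne_of_gt hβpos
      field_simp
      split <;> ring
    have hW1 : Wᵀ * W = 1 := by
      rw [hWH, Matrix.transpose_mul, hHsymm]
      calc Uᵀ * H * (H * U) = Uᵀ * (H * H) * U := by
            rw [Matrix.mul_assoc, Matrix.mul_assoc, Matrix.mul_assoc]
        _ = Uᵀ * U := by rw [hH2, Matrix.mul_one]
        _ = 1 := hU1
    -- the last column of W is the basis vector
    have hUnorm : ∑ m, U m ℓ ^ 2 = 1 := by
      have h1 : (Uᵀ * U) ℓ ℓ = ∑ m, U m ℓ * U m ℓ := by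
        simp [Matrix.mul_apply, Matrix.transpose_apply]
      rw [hU1] at h1
      simp only [Matrix.one_apply_eq] at h1
      rw [← h1.symm]
      exact Finset.sum_congr rfl fun m _ => (pow_two _)
    have hsume : ∑ m, (if m = ℓ then (1:ℝ) else 0) * U m ℓ = U ℓ ℓ := by
      simp [ite_mul, Finset.sum_ite_eq']
    have hqℓ : q ℓ = β / 2 := by
      have h2 : q ℓ = 1 - U ℓ ℓ := by
        have he : ∀ m : Fin k, d m * U m ℓ
            = U m ℓ ^ 2 - (if m = ℓ then 1 else 0) * U m ℓ := by
          intro m; simp only [hd]; ring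
        simp only [hq]
        rw [Finset.sum_congr rfl fun m _ => he m, Finset.sum_sub_distrib, hUnorm, hsume]
      have h3 : β = 2 - 2 * U ℓ ℓ := by
        have he : ∀ m : Fin k, d m ^ 2
            = U m ℓ ^ 2 - 2 * ((if m = ℓ then 1 else 0) * U m ℓ)
              + (if m = ℓ then (1:ℝ) else 0) := by
          intro m
          by_cases h : m = ℓ <;> simp only [hd, h, if_pos, if_neg, ite_true, ite_false] <;> ring
        rw [hβ, Finset.sum_congr rfl fun m _ => he m]
        rw [Finset.sum_add_distrib, Finset.sum_sub_distrib, hUnorm, ← Finset.mul_sum, hsume]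
        have : ∑ m : Fin k, (if m = ℓ then (1:ℝ) else 0) = 1 := by
          simp [Finset.sum_ite_eq']
        rw [this]
        ring
      rw [h2, h3]; ring
    have hcolW : ∀ i : Fin k, W i ⟨k - 1, by omega⟩ = if (i : ℕ) = k - 1 then 1 else 0 := by
      intro i
      have hℓ' : (⟨k - 1, by omega⟩ : Fin k) = ℓ := rfl
      rw [hℓ']
      simp only [hW]
      rw [hqℓ]
      have e1 : U i ℓ - 2 / β * (d i * (β / 2)) = U i ℓ - d i := by
        field_simp
      rw [e1]
      have e2 : U i ℓ - d i = if i = ℓ then 1 else 0 := by simp [hd]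
      rw [e2]
      have e3 : (i = ℓ) ↔ ((i : ℕ) = k - 1) := by simp [hℓ, Fin.ext_iff]
      rw [if_congr e3 rfl rfl]
    obtain ⟨v, hv⟩ := block_exists hk hkn W hW1 hcolW
    refine ⟨v, ?_⟩
    rw [hv]
    -- norm of the rank-one difference
    have hqq : ∑ j, q j ^ 2 = β := by
      have h1 : ∀ j : Fin k, q j ^ 2 = ∑ m, ∑ p, (d m * U m j) * (d p * U p j) := by
        intro j; simp only [hq]; rw [pow_two, Finset.sum_mul_sum]
      rw [Finset.sum_congr rfl fun j _ => h1 j, Finset.sum_comm]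
      have h2 : ∀ m : Fin k, ∑ j, ∑ p, (d m * U m j) * (d p * U p j)
          = ∑ p, (d m * d p) * ∑ j, U m j * U p j := by
        intro m
        rw [Finset.sum_comm]
        refine Finset.sum_congr rfl fun p _ => ?_
        rw [Finset.mul_sum]
        refine Finset.sum_congr rfl fun j _ => ?_
        ring
      rw [Finset.sum_congr rfl fun m _ => h2 m]
      have h3 : ∀ m p : Fin k, ∑ j, U m j * U p j = if m = p then 1 else 0 := by
        intro m p
        have : (U * Uᵀ) m p = ∑ j, U m j * U p j := by
          simp [Matrix.mul_apply, Matrix.transpose_apply]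
        rw [← this, hUU, Matrix.one_apply]
      rw [Finset.sum_congr rfl fun m _ =>
        Finset.sum_congr rfl fun p _ => by rw [h3 m p]]
      have h4 : ∀ m : Fin k, ∑ p, (d m * d p) * (if m = p then (1:ℝ) else 0) = d m ^ 2 := by
        intro m
        simp [mul_ite, Finset.sum_ite_eq, pow_two]
      rw [Finset.sum_congr rfl fun m _ => h4 m, hβ]
    set sβ : ℝ := Real.sqrt β with hsβ
    have hsβpos : 0 < sβ := Real.sqrt_pos.mpr hβpos
    have hsβsq : sβ ^ 2 = β := Real.sq_sqrt (le_of_lt hβpos)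
    set dh : Fin n → ℝ :=
      fun i => -(if h : (i : ℕ) < k then d ⟨i, h⟩ else 0) / sβ with hdh
    set qh : Fin n → ℝ :=
      fun j => (if h : (j : ℕ) < k then q ⟨j, h⟩ else 0) / sβ with hqhdef
    have hx : ∀ i j, (padR hkn W - padR hkn U) i j = 2 * (dh i * qh j) := by
      intro i j
      simp only [Matrix.sub_apply, padR, hdh, hqhdef]
      by_cases hik : (i : ℕ) < k
      · by_cases hjk : (j : ℕ) < k
        · simp only [dif_pos hik, dif_pos hjk]
          have hβ' : sβ * sβ = β := by
            have := hsβsq; rwa [pow_two] at this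
          have hLHS : W ⟨i, hik⟩ ⟨j, hjk⟩ - U ⟨i, hik⟩ ⟨j, hjk⟩
              = -(2 / β) * (d ⟨i, hik⟩ * q ⟨j, hjk⟩) := by
            simp only [hW]; ring
          have hRHS : 2 * (-(d ⟨i, hik⟩) / sβ * (q ⟨j, hjk⟩ / sβ))
              = -(2 / β) * (d ⟨i, hik⟩ * q ⟨j, hjk⟩) := by
            rw [div_mul_div_comm, hβ']
            ring
          rw [hLHS, hRHS]
        · simp only [dif_pos hik, dif_neg hjk]
          simp
      · simp only [dif_neg hik]
        simp
    have hdhat : ∑ m : Fin n, (if h : (m : ℕ) < k then d ⟨m, h⟩ else 0) ^ 2 = β := by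
      rw [sum_castLE hkn (fun m => (if h : (m : ℕ) < k then d ⟨m, h⟩ else 0) ^ 2)
        (fun m hm => by
          show (if h : (m : ℕ) < k then d ⟨m, h⟩ else 0) ^ 2 = 0
          rw [dif_neg (Nat.not_lt.mpr hm)]; norm_num)]
      rw [hβ]
      refine Finset.sum_congr rfl fun i _ => ?_
      have h : ((Fin.castLE hkn i : Fin n) : ℕ) < k := by
        simpa using i.isLt
      rw [dif_pos h]
      congr 1
    have hqhat : ∑ m : Fin n, (if h : (m : ℕ) < k then q ⟨m, h⟩ else 0) ^ 2 = β := by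
      rw [sum_castLE hkn (fun m => (if h : (m : ℕ) < k then q ⟨m, h⟩ else 0) ^ 2)
        (fun m hm => by
          show (if h : (m : ℕ) < k then q ⟨m, h⟩ else 0) ^ 2 = 0
          rw [dif_neg (Nat.not_lt.mpr hm)]; norm_num)]
      rw [← hqq]
      refine Finset.sum_congr rfl fun i _ => ?_
      have h : ((Fin.castLE hkn i : Fin n) : ℕ) < k := by
        simpa using i.isLt
      rw [dif_pos h]
      congr 1
    have hdh1 : ∑ m : Fin n, dh m ^ 2 = 1 := by
      have : ∀ m : Fin n, dh m ^ 2
          = (if h : (m : ℕ) < k then d ⟨m, h⟩ else 0) ^ 2 / β := by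
        intro m
        simp only [hdh]
        rw [div_pow, neg_sq, hsβsq]
      rw [Finset.sum_congr rfl fun m _ => this m, ← Finset.sum_div, hdhat,
        div_self (ne_of_gt hβpos)]
    have hqh1 : ∑ m : Fin n, qh m ^ 2 = 1 := by
      have : ∀ m : Fin n, qh m ^ 2
          = (if h : (m : ℕ) < k then q ⟨m, h⟩ else 0) ^ 2 / β := by
        intro m
        simp only [hqhdef]
        rw [div_pow, hsβsq]
      rw [Finset.sum_congr rfl fun m _ => this m, ← Finset.sum_div, hqhat,
        div_self (ne_of_gt hβpos)]
    rw [trNorm_rank_one _ dh qh 2 hx hdh1 hqh1 (by norm_num)]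
    rw [inv_mul_eq_div]
    rw [div_le_div_iff₀ hn hn]
    nlinarith [hn]
end
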